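/- Let R be a (not necessarily commutative) ring and suppose elements p_{-2}, p_{-4}, p_{-6}, ... and p_{-1}, p_{-3}, ... of an R-module M satisfy p_{-2j} = Σ_{μ=1}^{2j-1} A_{-2j,μ}(p_{-2j+μ}) for all j ≥ 1, where each A_{-2j,μ} : M → M is additive. Then for each l ≥ 1 there exist additive maps B_{-2l,-2μ+1} : M → M (1 ≤ μ ≤ l), given by sums over compositions of 2l-2μ into positive even parts of composites of the A's, such that p_{-2l} = Σ_{μ=1}^{l} B_{-2l,-2μ+1}(p_{-2μ+1}). -/

import Mathlib

open Finset

/-- Lemma 2.1 of the paper: if the even-indexed quantities `p (-2j)` are expressed as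
additive-operator combinations of the higher-indexed quantities, then each `p (-2l)` can
be expressed solely in terms of the odd-indexed quantities `p (-2μ+1)` (1 ≤ μ ≤ l),
with coefficient operators `B` that are sums of composites of the operators `A`. -/
theorem lemma_odd_even {R : Type*} [Ring R] {M : Type*} [AddCommGroup M] [Module R M]
    (p : ℤ → M) (A : ℤ → ℤ → AddMonoid.End M)
    (hp : ∀ j : ℤ, 1 ≤ j →
      p (-2 * j) = ∑ μ ∈ Finset.Icc (1 : ℤ) (2 * j - 1), A (-2 * j) μ (p (-2 * j + μ))) :
    ∀ l : ℤ, 1 ≤ l → ∃ B : ℤ → AddMonoid.End M,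
      (∀ μ : ℤ, B μ ∈ AddSubmonoid.closure
        {f : AddMonoid.End M | ∃ L : List (ℤ × ℤ), L ≠ [] ∧
          f = (L.map (fun q => A q.1 q.2)).prod}) ∧
      p (-2 * l) = ∑ μ ∈ Finset.Icc (1 : ℤ) l, B μ (p (-2 * μ + 1)) := by
  classical
  set S := AddSubmonoid.closure
    {f : AddMonoid.End M | ∃ L : List (ℤ × ℤ), L ≠ [] ∧
      f = (L.map (fun q => A q.1 q.2)).prod} with hS
  have hA : ∀ a b : ℤ, A a b ∈ S := fun a b =>
    AddSubmonoid.subset_closure ⟨[(a, b)], by simp⟩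
  have hmul : ∀ (a b : ℤ) (f : AddMonoid.End M), f ∈ S → A a b * f ∈ S := by
    intro a b f hf
    induction hf using AddSubmonoid.closure_induction with
    | mem g hg =>
        obtain ⟨L, hL, rfl⟩ := hg
        exact AddSubmonoid.subset_closure ⟨(a, b) :: L, by simp⟩
    | zero => simpa using zero_mem S
    | add f g _ _ hf hg => simpa [mul_add] using add_mem hf hg
  have key : ∀ n : ℕ, ∀ l : ℤ, 1 ≤ l → l ≤ n → ∃ B : ℤ → AddMonoid.End M,
      (∀ μ, B μ ∈ S) ∧ p (-2 * l) = ∑ μ ∈ Icc (1 : ℤ) l, B μ (p (-2 * μ + 1)) := by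
    intro n
    induction n with
    | zero => intro l h1 h2; exfalso; omega
    | succ n ih =>
      intro l h1 h2
      have H : ∀ s : ℤ, ∃ B' : ℤ → AddMonoid.End M, (∀ μ, B' μ ∈ S) ∧
          ((1 ≤ s ∧ s ≤ l - 1) →
            p (-2 * (l - s)) = ∑ ν ∈ Icc (1 : ℤ) (l - s), B' ν (p (-2 * ν + 1))) := by
        intro s
        by_cases hs : 1 ≤ s ∧ s ≤ l - 1
        · obtain ⟨hs1, hs2⟩ := hs
          obtain ⟨B', h1', h2'⟩ := ih (l - s) (by omega) (by omega)
          exact ⟨B', h1', fun _ => h2'⟩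
        · exact ⟨0, fun μ => zero_mem S, fun h => absurd h hs⟩
      choose B' hB'S hB'eq using H
      set B'' : ℤ → ℤ → AddMonoid.End M := fun s ν => if ν ≤ l - s then B' s ν else 0
        with hB''
      refine ⟨fun ν => A (-2 * l) (2 * (l - ν) + 1) +
          ∑ s ∈ Icc (1 : ℤ) (l - 1), A (-2 * l) (2 * s) * B'' s ν, fun ν => ?_, ?_⟩
      · refine add_mem (hA _ _) (AddSubmonoid.sum_mem S fun s _ => ?_)
        simp only [hB'']
        split
        · exact hmul _ _ _ (hB'S s ν)
        · simpa using zero_mem S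
      · rw [hp l h1]
        rw [← Finset.sum_filter_add_sum_filter_not (Icc (1 : ℤ) (2 * l - 1))
          (fun μ => μ % 2 = 1) (fun μ => A (-2 * l) μ (p (-2 * l + μ)))]
        have hodd : ∑ μ ∈ (Icc (1 : ℤ) (2 * l - 1)).filter (fun μ => μ % 2 = 1),
            A (-2 * l) μ (p (-2 * l + μ))
            = ∑ ν ∈ Icc (1 : ℤ) l, A (-2 * l) (2 * (l - ν) + 1) (p (-2 * ν + 1)) := by
          rw [show (Icc (1 : ℤ) (2 * l - 1)).filter (fun μ => μ % 2 = 1)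
              = (Icc (1 : ℤ) l).image (fun ν => 2 * (l - ν) + 1) from ?_]
          · rw [Finset.sum_image (by intro a _ b _ h; simp only at h; omega)]
            refine Finset.sum_congr rfl fun ν _ => ?_
            have hx : -2 * l + (2 * (l - ν) + 1) = -2 * ν + 1 := by ring
            rw [hx]
          · ext μ
            simp only [Finset.mem_filter, Finset.mem_image, Finset.mem_Icc]
            constructor
            · rintro ⟨⟨ha, hb⟩, hc⟩
              exact ⟨l - (μ - 1) / 2, by omega, by omega⟩
            · rintro ⟨ν, hν, rfl⟩
              omega
        have heven : ∑ μ ∈ (Icc (1 : ℤ) (2 * l - 1)).filter (fun μ => ¬ μ % 2 = 1),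
            A (-2 * l) μ (p (-2 * l + μ))
            = ∑ s ∈ Icc (1 : ℤ) (l - 1), ∑ ν ∈ Icc (1 : ℤ) l,
                A (-2 * l) (2 * s) (B'' s ν (p (-2 * ν + 1))) := by
          rw [show (Icc (1 : ℤ) (2 * l - 1)).filter (fun μ => ¬ μ % 2 = 1)
              = (Icc (1 : ℤ) (l - 1)).image (fun s => 2 * s) from ?_]
          · rw [Finset.sum_image (by intro a _ b _ h; simp only at h; omega)]
            refine Finset.sum_congr rfl fun s hs => ?_
            simp only [Finset.mem_Icc] at hs
            have h1s : -2 * l + 2 * s = -2 * (l - s) := by ring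
            rw [h1s, hB'eq s ⟨hs.1, hs.2⟩]
            have hstep1 : ∑ ν ∈ Icc (1 : ℤ) (l - s), B' s ν (p (-2 * ν + 1))
                = ∑ ν ∈ Icc (1 : ℤ) (l - s), B'' s ν (p (-2 * ν + 1)) := by
              refine Finset.sum_congr rfl fun ν hν => ?_
              simp only [Finset.mem_Icc] at hν
              simp only [hB'']
              rw [if_pos hν.2]
            have hstep2 : ∑ ν ∈ Icc (1 : ℤ) (l - s), B'' s ν (p (-2 * ν + 1))
                = ∑ ν ∈ Icc (1 : ℤ) l, B'' s ν (p (-2 * ν + 1)) := by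
              refine Finset.sum_subset
                (Finset.Icc_subset_Icc_right (show l - s ≤ l by omega)) ?_
              intro ν hν hν'
              simp only [Finset.mem_Icc] at hν hν'
              have hle : ¬ ν ≤ l - s := by omega
              simp only [hB'']
              rw [if_neg hle]
              simp
            rw [hstep1, hstep2, map_sum]
          · ext μ
            simp only [Finset.mem_filter, Finset.mem_image, Finset.mem_Icc]
            constructor
            · rintro ⟨⟨ha, hb⟩, hc⟩
              exact ⟨μ / 2, by omega, by omega⟩
            · rintro ⟨s, hs, rfl⟩
              omega
        have hadd : ∀ (f g : AddMonoid.End M) (x : M), (f + g) x = f x + g x :=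
          fun f g x => rfl
        have happly : ∀ (T : Finset ℤ) (g : ℤ → AddMonoid.End M) (x : M),
            (∑ s ∈ T, g s) x = ∑ s ∈ T, g s x := by
          intro T g x
          induction T using Finset.cons_induction with
          | empty => simp
          | cons a T ha ihT => rw [Finset.sum_cons, Finset.sum_cons, hadd, ihT]
        rw [hodd, heven, Finset.sum_comm, ← Finset.sum_add_distrib]
        refine Finset.sum_congr rfl fun ν _ => ?_
        rw [hadd, happly]
        refine congrArg₂ _ rfl (Finset.sum_congr rfl fun s _ => ?_)
        simp only [AddMonoid.End.coe_mul, Function.comp_apply]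
  intro l hl
  exact key l.toNat l hl (by omega)
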